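/- Let q be a distribution on a finite product space with tree G, split into hidden part H and observed part O with assignment x=(x_h,x_o). Suppose q(z)=0 whenever z_o ≠ x_o (q is supported on assignments agreeing with x_o). If I(x;μ_q) = 0 where μ_q are the tree marginals of q, then I(x_h; μ_{q,H}) + (1−|P_H|)·q(total mass) = 0, where μ_{q,H} are the marginals restricted to hidden nodes and hidden-hidden edges, I(x_h;μ_{q,H}) = Σ_{i∈H}(1−dᵢ^H)μᵢ(xᵢ) + Σ_{(i,j)∈E_H}μᵢⱼ(xᵢ,xⱼ), dᵢ^H is the number of hidden neighbors of i, and |P_H| is the number of connected components of the induced hidden subgraph. -/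

import Mathlib

open Finset
open SimpleGraph Walk


lemma forest_card {W : Type*} [Fintype W] [DecidableEq W] (G : SimpleGraph W)
    [DecidableRel G.Adj] (h : G.IsAcyclic) :
    G.edgeFinset.card + Nat.card G.ConnectedComponent = Fintype.card W := by
  classical
  -- root of each component
  set rt : W → W := fun w => (G.connectedComponentMk w).out with hrtdef
  have hmkrt : ∀ w, G.connectedComponentMk (rt w) = G.connectedComponentMk w := by
    intro w
    exact (G.connectedComponentMk w).out_eq
  have hreach : ∀ w, G.Reachable w (rt w) := fun w =>
    (ConnectedComponent.eq.mp (hmkrt w)).symm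
  have hrt_adj : ∀ {a b : W}, G.Adj a b → rt a = rt b := by
    intro a b hab
    simp only [hrtdef]
    rw [ConnectedComponent.sound hab.reachable]
  -- unique path to root
  have hex : ∀ w, ∃! p : G.Walk w (rt w), p.IsPath := by
    intro w
    obtain ⟨p⟩ := hreach w
    exact ⟨p.toPath, p.toPath.2, fun q hq => Subtype.ext_iff.mp (h.path_unique ⟨q, hq⟩ p.toPath)⟩
  choose f hf hf' using hex
  -- root finset
  set R : Finset W := Finset.univ.filter (fun w => rt w = w) with hR
  have hcard_R : R.card = Nat.card G.ConnectedComponent := by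
    rw [Nat.card_eq_fintype_card, ← Fintype.card_coe]
    apply Fintype.card_congr
    refine ⟨fun w => G.connectedComponentMk w.1, fun c => ⟨c.out, ?_⟩, ?_, ?_⟩
    · simp only [hR, Finset.mem_filter, Finset.mem_univ, true_and, hrtdef]
      exact congrArg Quot.out c.out_eq
    · rintro ⟨w, hw⟩
      simp only [hR, Finset.mem_filter, Finset.mem_univ, true_and] at hw
      exact Subtype.ext hw
    · intro c
      exact c.out_eq
  have key : Rᶜ.card = G.edgeFinset.card := by
    have hnotnil : ∀ w ∈ Rᶜ, ¬ (f w).Nil := by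
      intro w hw
      simp only [hR, Finset.mem_compl, Finset.mem_filter, Finset.mem_univ, true_and] at hw
      exact not_nil_of_ne fun hh => hw hh.symm
    refine Finset.card_bij (fun w hw => ((f w).firstDart (hnotnil w hw)).edge)
      (fun a ha => ?_) ?_ ?_
    · simp
    · intro a ha b hb hab
      wlog h' : (f a).length ≤ (f b).length generalizing a b
      · exact Eq.symm (this _ hb _ ha hab.symm (le_of_not_ge h'))
      rw [dart_edge_eq_iff] at hab
      obtain (hab | hab) := hab
      · exact congrArg (·.fst) hab
      · have h1 : ((f a).firstDart (hnotnil a ha)).snd = b := congrArg (·.snd) hab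
        have hadj : G.Adj a b := by
          have := ((f a).firstDart (hnotnil a ha)).adj
          rwa [h1] at this
        have h3 := congrArg Walk.length (hf' _ (((f a).tail).copy h1 (hrt_adj hadj)) ?_)
        · erw [length_copy, ← add_left_inj 1, length_tail_add_one (hnotnil a ha)] at h3
          omega
        · simp only [isPath_copy]
          exact (isPath_copy _ _ _).mpr (hf a).tail
    · simp only [mem_edgeFinset, Sym2.forall, SimpleGraph.mem_edgeSet]
      intro x y hxy
      wlog h' : (f x).length ≤ (f y).length generalizing x y
      · obtain ⟨w, hw, he⟩ := this y x hxy.symm (le_of_not_ge h')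
        exact ⟨w, hw, by rwa [Sym2.eq_swap]⟩
      have hrxy : rt x = rt y := hrt_adj hxy
      have hyRc : y ∈ Rᶜ := by
        simp only [hR, Finset.mem_compl, Finset.mem_filter, Finset.mem_univ, true_and]
        intro hry
        have hfy : (f y).length = 0 := by
          have := hf' y (Walk.nil.copy rfl hry.symm) (by simp)
          rw [← this]; simp
        have hfx : (f x).length = 0 := by omega
        have : x = rt x := Walk.eq_of_length_eq_zero hfx
        rw [hrxy, hry] at this
        exact hxy.ne this
      refine ⟨y, hyRc, ?_⟩
      rw [dart_edge_eq_mk'_iff]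
      right
      have hyns : y ∉ (f x).support := by
        intro hy
        have htu : (f x).takeUntil y hy = Walk.cons hxy Walk.nil := by
          have h1 : ((f x).takeUntil y hy).IsPath := (hf x).takeUntil hy
          have h2 : (Walk.cons hxy (Walk.nil : G.Walk y y)).IsPath := by
            simp [Walk.isPath_def, hxy.ne]
          exact Subtype.ext_iff.mp (h.path_unique ⟨_, h1⟩ ⟨_, h2⟩)
        have hsp := (f x).take_spec hy
        have hlen := congrArg Walk.length hsp
        rw [Walk.length_append, htu] at hlen
        have hdu : ((f x).dropUntil y hy).copy rfl hrxy = f y :=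
          hf' y _ (by simpa using ((hf x).dropUntil hy))
        have := congrArg Walk.length hdu
        rw [length_copy] at this
        simp only [Walk.length_cons, Walk.length_nil] at hlen
        omega
      have hcons : (Walk.cons hxy.symm (f x)).copy rfl hrxy = f y := by
        apply hf' y
        simp only [isPath_copy]
        exact (hf x).cons hyns
      have := congrArg (fun p => p.getVert 1) hcons
      simp only [Walk.getVert_copy] at this
      rw [Walk.firstDart_toProd]
      rw [← hcons]
      simp [Walk.firstDart_toProd, Walk.getVert_copy]
  have := Finset.card_compl_add_card R
  omega

-- symmetrization lemma
lemma two_mul_sum_lt {V : Type*} [Fintype V] [LinearOrder V]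
    (P : V × V → Prop) [DecidablePred P]
    (hsym : ∀ a b, P (a, b) ↔ P (b, a)) (hne : ∀ a b, P (a, b) → a ≠ b)
    (g : V × V → ℝ) (hg : ∀ a b, g (a, b) = g (b, a)) :
    2 * ∑ e ∈ Finset.univ.filter (fun e : V × V => e.1 < e.2 ∧ P e), g e
      = ∑ a, ∑ b, if P (a, b) then g (a, b) else 0 := by
  classical
  have hrhs : ∑ a, ∑ b, (if P (a, b) then g (a, b) else 0)
      = ∑ e ∈ Finset.univ.filter P, g e := by
    rw [Finset.sum_filter, Fintype.sum_prod_type]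
  rw [hrhs]
  have hunion : Finset.univ.filter P
      = (Finset.univ.filter (fun e : V × V => e.1 < e.2 ∧ P e))
        ∪ (Finset.univ.filter (fun e : V × V => e.2 < e.1 ∧ P e)) := by
    ext e
    simp only [Finset.mem_filter, Finset.mem_univ, true_and, Finset.mem_union]
    constructor
    · intro hP
      rcases lt_or_gt_of_ne (hne e.1 e.2 (by simpa using hP)) with h | h
      · exact Or.inl ⟨h, hP⟩
      · exact Or.inr ⟨h, hP⟩
    · rintro (⟨_, h⟩ | ⟨_, h⟩) <;> exact h
  have hdisj : Disjoint (Finset.univ.filter (fun e : V × V => e.1 < e.2 ∧ P e))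
      (Finset.univ.filter (fun e : V × V => e.2 < e.1 ∧ P e)) := by
    rw [Finset.disjoint_filter]
    rintro e - ⟨h1, -⟩ ⟨h2, -⟩
    exact absurd (h1.trans h2) (lt_irrefl _)
  rw [hunion, Finset.sum_union hdisj]
  have hswap : ∑ e ∈ Finset.univ.filter (fun e : V × V => e.2 < e.1 ∧ P e), g e
      = ∑ e ∈ Finset.univ.filter (fun e : V × V => e.1 < e.2 ∧ P e), g e := by
    refine Finset.sum_nbij' (fun e => e.swap) (fun e => e.swap) ?_ ?_ ?_ ?_ ?_
    · intro e he
      simp only [Finset.mem_filter, Finset.mem_univ, true_and] at he ⊢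
      exact ⟨he.1, (hsym e.2 e.1).mpr (by simpa using he.2)⟩
    · intro e he
      simp only [Finset.mem_filter, Finset.mem_univ, true_and] at he ⊢
      exact ⟨he.1, (hsym e.2 e.1).mpr (by simpa using he.2)⟩
    · intro e _; simp
    · intro e _; simp
    · intro e _; exact hg e.1 e.2
  rw [hswap]; ring

lemma degree_induce' {V : Type*} [Fintype V] [DecidableEq V] (G : SimpleGraph V)
    [DecidableRel G.Adj] (H : Set V) [DecidablePred (· ∈ H)]
    [DecidableRel (G.induce H).Adj] (a : H) :
    (G.induce H).degree a = ((G.neighborFinset (a : V)).filter (· ∈ H)).card := by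
  classical
  rw [← SimpleGraph.card_neighborFinset_eq_degree]
  refine Finset.card_bij (fun b _ => (b : V)) ?_ ?_ ?_
  · intro b hb
    simp only [SimpleGraph.mem_neighborFinset] at hb
    simp only [Finset.mem_filter, SimpleGraph.mem_neighborFinset]
    exact ⟨by simpa using hb, b.2⟩
  · intro b _ c _ h
    exact Subtype.ext h
  · intro j hj
    simp only [Finset.mem_filter, SimpleGraph.mem_neighborFinset] at hj
    exact ⟨⟨j, hj.2⟩, by simp [SimpleGraph.mem_neighborFinset, hj.1], rfl⟩

/-- If a nonnegative `q` is supported on assignments agreeing with `x` on the observed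
coordinates and `I(x;μ_q) = 0` (no positive part), then
`I(x_h;μ_{q,H}) + (1 − |P_H|)·τ = 0`, where `τ` is the total mass of `q`,
`dᵢ^H` counts hidden neighbors and `|P_H|` the hidden components. -/
theorem stmt17 {n : ℕ} {X : Fin n → Type*} [∀ i, Fintype (X i)] [∀ i, Nonempty (X i)]
    [∀ i, DecidableEq (X i)]
    (G : SimpleGraph (Fin n)) [DecidableRel G.Adj] (hG : G.IsTree)
    (H : Set (Fin n)) [DecidablePred (· ∈ H)]
    (x : ∀ i, X i)
    (q : (∀ i, X i) → ℝ) (hq0 : ∀ z, 0 ≤ q z)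
    (hsupp : ∀ z, q z ≠ 0 → ∀ i, i ∉ H → z i = x i)
    (hIfull : (∑ i, (1 - (G.degree i : ℝ)) * (∑ z, if z i = x i then q z else 0))
      + (∑ e ∈ Finset.univ.filter (fun e : Fin n × Fin n => e.1 < e.2 ∧ G.Adj e.1 e.2),
          ∑ z, if z e.1 = x e.1 ∧ z e.2 = x e.2 then q z else 0) = 0) :
    (∑ i ∈ Finset.univ.filter (· ∈ H),
        (1 - (((G.neighborFinset i).filter (· ∈ H)).card : ℝ))
          * (∑ z, if z i = x i then q z else 0))
      + (∑ e ∈ Finset.univ.filter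
            (fun e : Fin n × Fin n => e.1 < e.2 ∧ G.Adj e.1 e.2 ∧ e.1 ∈ H ∧ e.2 ∈ H),
          ∑ z, if z e.1 = x e.1 ∧ z e.2 = x e.2 then q z else 0)
      + (1 - (Nat.card (G.induce H).ConnectedComponent : ℝ)) * (∑ z, q z) = 0 := by
  classical
  haveI : DecidableRel (G.induce H).Adj := fun a b => decidable_of_iff (G.Adj a.1 b.1) (by simp)
  -- notation
  set τ : ℝ := ∑ z, q z with hτ
  set m : Fin n → ℝ := fun i => ∑ z, if z i = x i then q z else 0 with hm
  set w : Fin n → Fin n → ℝ := fun i j => ∑ z, if z i = x i ∧ z j = x j then q z else 0 with hwdef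
  set dH : Fin n → ℕ := fun i => ((G.neighborFinset i).filter (· ∈ H)).card with hdH
  set dO : Fin n → ℕ := fun i => ((G.neighborFinset i).filter (· ∉ H)).card with hdO
  set Hf : Finset (Fin n) := Finset.univ.filter (· ∈ H) with hHf
  set Of : Finset (Fin n) := Finset.univ.filter (fun i => ¬ i ∈ H) with hOf
  set pH : ℕ := Nat.card (G.induce H).ConnectedComponent with hpH
  -- support facts
  have hm_obs : ∀ i, i ∉ H → m i = τ := by
    intro i hi
    refine Finset.sum_congr rfl fun z _ => ?_
    by_cases hz : q z = 0
    · simp [hz]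
    · rw [if_pos (hsupp z hz i hi)]
  have hw_right : ∀ i j, j ∉ H → w i j = m i := by
    intro i j hj
    refine Finset.sum_congr rfl fun z _ => ?_
    by_cases hz : q z = 0
    · simp [hz]
    · simp [hsupp z hz j hj]
  have hw_left : ∀ i j, i ∉ H → w i j = m j := by
    intro i j hi
    refine Finset.sum_congr rfl fun z _ => ?_
    by_cases hz : q z = 0
    · simp [hz]
    · simp [hsupp z hz i hi]
  -- degree split
  have hdeg_split : ∀ i, G.degree i = dH i + dO i := by
    intro i
    rw [hdH, hdO, ← SimpleGraph.card_neighborFinset_eq_degree]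
    exact (Finset.card_filter_add_card_filter_not _).symm
  -- counting facts
  have hHcard : Hf.card + Of.card = n := by
    rw [hHf, hOf]
    rw [Finset.card_filter_add_card_filter_not]
    simp
  have hedge_total : G.edgeFinset.card + 1 = n := by
    simpa using hG.card_edgeFinset
  have hdeg_sum : ∑ i, G.degree i = 2 * G.edgeFinset.card :=
    SimpleGraph.sum_degrees_eq_twice_card_edges G
  have hac : (G.induce H).IsAcyclic := by
    intro v c hc
    exact hG.IsAcyclic (c.map (SimpleGraph.Embedding.induce H).toHom)
      (hc.map Subtype.val_injective)
  have hforest : (G.induce H).edgeFinset.card + pH = Fintype.card H :=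
    forest_card _ hac
  have hHsub : Fintype.card H = Hf.card := by
    rw [hHf]; exact Fintype.card_subtype _
  have hSHdH : ∑ i ∈ Hf, dH i = 2 * (G.induce H).edgeFinset.card := by
    rw [← SimpleGraph.sum_degrees_eq_twice_card_edges]
    calc ∑ i ∈ Hf, dH i = ∑ a : H, dH (a : Fin n) :=
          Finset.sum_subtype _ (by simp [hHf]) _
      _ = ∑ a : H, (G.induce H).degree a :=
          Finset.sum_congr rfl fun a _ => (degree_induce' G H a).symm
  have hdO' : ∀ i, dO i = ∑ j, if G.Adj i j ∧ j ∉ H then 1 else 0 := by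
    intro i
    simp only [hdO]
    rw [SimpleGraph.neighborFinset_eq_filter, Finset.filter_filter, Finset.card_filter]
  have hdH' : ∀ i, dH i = ∑ j, if G.Adj i j ∧ j ∈ H then 1 else 0 := by
    intro i
    simp only [hdH]
    rw [SimpleGraph.neighborFinset_eq_filter, Finset.filter_filter, Finset.card_filter]
  have hcross : ∑ i ∈ Hf, dO i = ∑ i ∈ Of, dH i := by
    calc ∑ i ∈ Hf, dO i
        = ∑ i, ∑ j, if i ∈ H ∧ G.Adj i j ∧ j ∉ H then 1 else 0 := by
          rw [hHf, Finset.sum_filter]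
          refine Finset.sum_congr rfl fun i _ => ?_
          by_cases hi : i ∈ H
          · simp only [hi, if_true, true_and]
            exact hdO' i
          · simp [hi]
      _ = ∑ j, ∑ i, if i ∈ H ∧ G.Adj i j ∧ j ∉ H then 1 else 0 := Finset.sum_comm
      _ = ∑ i ∈ Of, dH i := by
          rw [hOf, Finset.sum_filter]
          refine Finset.sum_congr rfl fun j _ => ?_
          by_cases hj : j ∈ H
          · simp [hj]
          · simp only [hj, if_true, not_false_iff, and_true, if_neg, if_pos]
            rw [hdH' j]
            refine Finset.sum_congr rfl fun i _ => ?_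
            refine if_congr ?_ rfl rfl
            rw [G.adj_comm]
            tauto
  have hHdeg : ∑ i ∈ Hf, G.degree i = ∑ i ∈ Hf, dH i + ∑ i ∈ Hf, dO i := by
    rw [← Finset.sum_add_distrib]
    exact Finset.sum_congr rfl fun i _ => hdeg_split i
  have hOdeg : ∑ i ∈ Of, G.degree i = ∑ i ∈ Of, dH i + ∑ i ∈ Of, dO i := by
    rw [← Finset.sum_add_distrib]
    exact Finset.sum_congr rfl fun i _ => hdeg_split i
  have hsum_split : ∑ i ∈ Hf, G.degree i + ∑ i ∈ Of, G.degree i = ∑ i, G.degree i := by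
    rw [hHf, hOf]
    exact Finset.sum_filter_add_sum_filter_not _ _ _
  have hkey : 2 * pH + (2 * Of.card + ∑ i ∈ Of, dO i) = 2 + 2 * ∑ i ∈ Of, G.degree i := by
    have hn : Hf.card = Fintype.card H := hHsub.symm
    omega
  -- real scalar identity
  have sc : 2 - 2 * (pH : ℝ)
      = 2 * (∑ i ∈ Of, (1 - (G.degree i : ℝ))) + ∑ i ∈ Of, (dO i : ℝ) := by
    have h1 : ∑ i ∈ Of, (1 - (G.degree i : ℝ))
        = (Of.card : ℝ) - ((∑ i ∈ Of, G.degree i : ℕ) : ℝ) := by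
      rw [Finset.sum_sub_distrib, Finset.sum_const, nsmul_eq_mul, mul_one, Nat.cast_sum]
    have h2 : ∑ i ∈ Of, (dO i : ℝ) = ((∑ i ∈ Of, dO i : ℕ) : ℝ) := (Nat.cast_sum _ _).symm
    have h3 := congrArg (Nat.cast : ℕ → ℝ) hkey
    push_cast at h3
    rw [h1, h2]
    rw [h2, show (∑ x ∈ Of, ((G.degree x : ℝ))) = ((∑ i ∈ Of, G.degree i : ℕ) : ℝ) from
      (Nat.cast_sum _ _).symm] at h3
    linarith
  -- symmetry of w
  have hw_symm : ∀ i j, w i j = w j i := by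
    intro i j
    exact Finset.sum_congr rfl fun z _ => if_congr and_comm rfl rfl
  -- restated hypothesis
  have hIfull' : (∑ i, (1 - (G.degree i : ℝ)) * m i)
      + (∑ e ∈ Finset.univ.filter (fun e : Fin n × Fin n => e.1 < e.2 ∧ G.Adj e.1 e.2),
          w e.1 e.2) = 0 := hIfull
  -- symmetrized edge sums
  have hB' : 2 * (∑ e ∈ Finset.univ.filter
        (fun e : Fin n × Fin n => e.1 < e.2 ∧ G.Adj e.1 e.2), w e.1 e.2)
      = ∑ i, ∑ j, if G.Adj i j then w i j else 0 :=
    two_mul_sum_lt (fun e => G.Adj e.1 e.2) (fun a b => G.adj_comm a b)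
      (fun a b h => h.ne) (fun e => w e.1 e.2) (fun a b => hw_symm a b)
  have hB : 2 * (∑ e ∈ Finset.univ.filter
        (fun e : Fin n × Fin n => e.1 < e.2 ∧ G.Adj e.1 e.2 ∧ e.1 ∈ H ∧ e.2 ∈ H), w e.1 e.2)
      = ∑ i, ∑ j, if G.Adj i j ∧ i ∈ H ∧ j ∈ H then w i j else 0 :=
    two_mul_sum_lt (fun e => G.Adj e.1 e.2 ∧ e.1 ∈ H ∧ e.2 ∈ H)
      (fun a b => by constructor <;> rintro ⟨h, h1, h2⟩ <;> exact ⟨h.symm, h2, h1⟩)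
      (fun a b h => h.1.ne) (fun e => w e.1 e.2) (fun a b => hw_symm a b)
  -- pointwise split of the full edge sum
  have hpt : ∀ i j, (if G.Adj i j then w i j else 0)
      = (if G.Adj i j ∧ i ∈ H ∧ j ∈ H then w i j else 0)
        + (if G.Adj i j ∧ i ∈ H ∧ j ∉ H then m i else 0)
        + (if G.Adj i j ∧ i ∉ H ∧ j ∈ H then m j else 0)
        + (if G.Adj i j ∧ i ∉ H ∧ j ∉ H then τ else 0) := by
    intro i j
    by_cases hij : G.Adj i j
    · by_cases hi : i ∈ H <;> by_cases hj : j ∈ H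
      · simp [hij, hi, hj]
      · simp [hij, hi, hj, hw_right i j hj]
      · simp [hij, hi, hj, hw_left i j hi]
      · simp [hij, hi, hj, (hw_right i j hj).trans (hm_obs i hi)]
    · simp [hij]
  have hsplit : (∑ i, ∑ j, if G.Adj i j then w i j else 0)
      = (∑ i, ∑ j, if G.Adj i j ∧ i ∈ H ∧ j ∈ H then w i j else 0)
        + (∑ i, ∑ j, if G.Adj i j ∧ i ∈ H ∧ j ∉ H then m i else 0)
        + (∑ i, ∑ j, if G.Adj i j ∧ i ∉ H ∧ j ∈ H then m j else 0)
        + (∑ i, ∑ j, if G.Adj i j ∧ i ∉ H ∧ j ∉ H then τ else 0) := by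
    simp only [hpt, Finset.sum_add_distrib]
  have hOH : (∑ i, ∑ j, if G.Adj i j ∧ i ∉ H ∧ j ∈ H then m j else 0)
      = ∑ i, ∑ j, if G.Adj i j ∧ i ∈ H ∧ j ∉ H then m i else 0 := by
    rw [Finset.sum_comm]
    refine Finset.sum_congr rfl fun i _ => Finset.sum_congr rfl fun j _ => ?_
    refine if_congr ?_ rfl rfl
    rw [G.adj_comm]; tauto
  have hcardHO : ∀ i, (Finset.univ.filter (fun j => G.Adj i j ∧ j ∉ H)).card = dO i := by
    intro i
    simp only [hdO, SimpleGraph.neighborFinset_eq_filter, Finset.filter_filter]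
  have hHO : (∑ i, ∑ j, if G.Adj i j ∧ i ∈ H ∧ j ∉ H then m i else 0)
      = ∑ i ∈ Hf, (dO i : ℝ) * m i := by
    rw [hHf, Finset.sum_filter]
    refine Finset.sum_congr rfl fun i _ => ?_
    by_cases hi : i ∈ H
    · simp only [hi, if_true, true_and]
      rw [← Finset.sum_filter, Finset.sum_const, nsmul_eq_mul, hcardHO i]
    · simp [hi]
  have hOO : (∑ i, ∑ j, if G.Adj i j ∧ i ∉ H ∧ j ∉ H then τ else 0)
      = (∑ i ∈ Of, (dO i : ℝ)) * τ := by
    rw [Finset.sum_mul, hOf, Finset.sum_filter]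
    refine Finset.sum_congr rfl fun i _ => ?_
    by_cases hi : i ∈ H
    · simp [hi]
    · simp only [hi, not_false_iff, if_true, true_and]
      rw [← Finset.sum_filter, Finset.sum_const, nsmul_eq_mul, hcardHO i]
  -- vertex-sum decomposition
  have hA'2 : (∑ i, (1 - (G.degree i : ℝ)) * m i)
      = (∑ i ∈ Hf, (1 - (G.degree i : ℝ)) * m i)
        + (∑ i ∈ Of, (1 - (G.degree i : ℝ))) * τ := by
    rw [← Finset.sum_filter_add_sum_filter_not Finset.univ (· ∈ H)
      (fun i => (1 - (G.degree i : ℝ)) * m i)]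
    congr 1
    rw [Finset.sum_mul]
    refine Finset.sum_congr rfl fun i hi => ?_
    rw [hm_obs i (by simpa [hOf] using hi)]
  have e1 : (∑ i ∈ Hf, (1 - (dH i : ℝ)) * m i)
      = (∑ i ∈ Hf, (1 - (G.degree i : ℝ)) * m i) + ∑ i ∈ Hf, (dO i : ℝ) * m i := by
    rw [← Finset.sum_add_distrib]
    refine Finset.sum_congr rfl fun i _ => ?_
    have hsp : (G.degree i : ℝ) = (dH i : ℝ) + (dO i : ℝ) := by
      exact_mod_cast congrArg (Nat.cast : ℕ → ℝ) (hdeg_split i)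
    rw [hsp]; ring
  have h0 : (∑ i ∈ Hf, (1 - (G.degree i : ℝ)) * m i)
      + (∑ i ∈ Of, (1 - (G.degree i : ℝ))) * τ
      + (∑ e ∈ Finset.univ.filter
          (fun e : Fin n × Fin n => e.1 < e.2 ∧ G.Adj e.1 e.2), w e.1 e.2) = 0 := by
    rw [← hA'2]; exact hIfull'
  have e3 : 2 * (∑ e ∈ Finset.univ.filter
        (fun e : Fin n × Fin n => e.1 < e.2 ∧ G.Adj e.1 e.2), w e.1 e.2)
      = 2 * (∑ e ∈ Finset.univ.filter
          (fun e : Fin n × Fin n => e.1 < e.2 ∧ G.Adj e.1 e.2 ∧ e.1 ∈ H ∧ e.2 ∈ H), w e.1 e.2)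
        + 2 * (∑ i ∈ Hf, (dO i : ℝ) * m i) + (∑ i ∈ Of, (dO i : ℝ)) * τ := by
    rw [hB', hsplit, hOH, hHO, hOO, hB]; ring
  show (∑ i ∈ Hf, (1 - (dH i : ℝ)) * m i)
      + (∑ e ∈ Finset.univ.filter
          (fun e : Fin n × Fin n => e.1 < e.2 ∧ G.Adj e.1 e.2 ∧ e.1 ∈ H ∧ e.2 ∈ H), w e.1 e.2)
      + (1 - (pH : ℝ)) * τ = 0
  linear_combination e1 + h0 - (1/2) * e3 + (τ/2) * sc
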